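/- arXiv:1404.5401 — 2 statements merged into one kernel-verified Lean document; each statement's English description precedes it below -/
import Mathlib

section
/- Let q, t be transcendental (generic) over ℚ and define for a partition λ: ε_λ = 1 + (t−1) Σ_{k=1}^{ℓ(λ)} (q^{λ_k} − 1) t^{−k}, and for an N-tuple λ⃗ with independent parameters u_1,…,u_N: e_{λ⃗} = Σ_{i=1}^N u_i ε_{λ^(i)}. Then e_{λ⃗} = e_{μ⃗} implies λ⃗ = μ⃗ (the eigenvalues are non-degenerate). -/
structure Partition' where
  parts : ℕ →₀ ℕ
  antitone : ∀ ⦃i j : ℕ⦄, i ≤ j → parts j ≤ parts i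

/-- Number of nonzero parts `ℓ(λ)`. -/
def Partition'.length (l : Partition') : ℕ := l.parts.support.card

/-- `ε_λ = 1 + (t−1) Σ_{k=1}^{ℓ(λ)} (q^{λ_k} − 1) t^{−k}`. -/
noncomputable def eps {K : Type*} [Field K] (q t : K) (l : Partition') : K :=
  1 + (t - 1) * ∑ k ∈ Finset.range l.length, (q ^ (l.parts k) - 1) * (t ^ (k + 1))⁻¹

open MvPolynomial Finset

theorem Partition'.ext' {l m : Partition'} (h : l.parts = m.parts) : l = m := by
  cases l; cases m; simpa using h

theorem Partition'.parts_eq_zero (l : Partition') {k : ℕ} (hk : l.length ≤ k) :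
    l.parts k = 0 := by
  by_contra hne
  have hsub : Finset.range (k + 1) ⊆ l.parts.support := by
    intro j hj
    rw [Finset.mem_range] at hj
    rw [Finsupp.mem_support_iff]
    have := l.antitone (Nat.lt_succ_iff.mp hj)
    omega
  have := Finset.card_le_card hsub
  rw [Finset.card_range] at this
  have : k + 1 ≤ l.length := this
  omega

/-- the polynomial `(T-1) * ∑_{k<M} (Q^{λ_k}-1) T^{M-(k+1)}` -/
noncomputable def Pl (l : Partition') (M : ℕ) : MvPolynomial (Fin 2) ℚ :=
  (X 1 - 1) * ∑ k ∈ Finset.range M, (X 0 ^ (l.parts k) - 1) * X 1 ^ (M - (k + 1))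

theorem eval_Pl {K : Type*} [Field K] [CharZero K] (q t : K) (ht : t ≠ 0)
    (l : Partition') (M : ℕ) (hM : l.length ≤ M) :
    aeval ![q, t] (Pl l M) = t ^ M * (eps q t l - 1) := by
  have h1 : aeval ![q, t] (Pl l M)
      = (t - 1) * ∑ k ∈ Finset.range M, (q ^ (l.parts k) - 1) * t ^ (M - (k + 1)) := by
    simp [Pl]
  have h2 : ∑ k ∈ Finset.range M, (q ^ (l.parts k) - 1) * t ^ (M - (k + 1))
      = ∑ k ∈ Finset.range l.length, (q ^ (l.parts k) - 1) * t ^ (M - (k + 1)) := by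
    refine (Finset.sum_subset (Finset.range_subset_range.mpr hM) ?_).symm
    intro k _ hk
    rw [Finset.mem_range, not_lt] at hk
    rw [l.parts_eq_zero hk]
    simp
  have h3 : ∀ k ∈ Finset.range l.length,
      (q ^ (l.parts k) - 1) * t ^ (M - (k + 1))
      = t ^ M * ((q ^ (l.parts k) - 1) * (t ^ (k + 1))⁻¹) := by
    intro k hk
    rw [Finset.mem_range] at hk
    have hkM : k + 1 ≤ M := by omega
    rw [pow_sub₀ t ht hkM]
    field_simp
  rw [h1, h2, Finset.sum_congr rfl h3, ← Finset.mul_sum, eps]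
  ring

theorem single_add_single_eq (n c n' c' : ℕ) :
    (Finsupp.single (0 : Fin 2) n + Finsupp.single 1 c
      = Finsupp.single 0 n' + Finsupp.single 1 c') ↔ (n = n' ∧ c = c') := by
  constructor
  · intro hh
    have h0 := DFunLike.congr_fun hh (0 : Fin 2)
    have h1 := DFunLike.congr_fun hh (1 : Fin 2)
    simp [Finsupp.single_apply] at h0 h1
    exact ⟨h0, h1⟩
  · rintro ⟨rfl, rfl⟩; rfl

theorem extract (M : ℕ) (a b : ℕ → ℕ)
    (hs : ∑ k ∈ Finset.range M, ((X 0 : MvPolynomial (Fin 2) ℚ) ^ a k - 1) * X 1 ^ (M - (k + 1))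
        = ∑ k ∈ Finset.range M, ((X 0 : MvPolynomial (Fin 2) ℚ) ^ b k - 1) * X 1 ^ (M - (k + 1)))
    {k : ℕ} (hk : k < M) : a k = b k := by
  have hterm : ∀ (n c : ℕ), ((X 0 : MvPolynomial (Fin 2) ℚ) ^ n - 1) * X 1 ^ c
      = monomial (Finsupp.single 0 n + Finsupp.single 1 c) (1 : ℚ)
        - monomial (Finsupp.single 0 0 + Finsupp.single 1 c) (1 : ℚ) := by
    intro n c
    rw [sub_mul, one_mul, X_pow_eq_monomial, X_pow_eq_monomial, monomial_mul, one_mul,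
      Finsupp.single_zero, zero_add]
  have hsum : ∀ (f : ℕ → ℕ) (n : ℕ),
      coeff (Finsupp.single 0 n + Finsupp.single 1 (M - (k + 1)))
        (∑ j ∈ Finset.range M,
          ((X 0 : MvPolynomial (Fin 2) ℚ) ^ f j - 1) * X 1 ^ (M - (j + 1)))
      = (if f k = n then (1:ℚ) else 0) - (if 0 = n then (1:ℚ) else 0) := by
    intro f n
    rw [coeff_sum]
    rw [Finset.sum_eq_single_of_mem k (Finset.mem_range.mpr hk)]
    · rw [hterm, coeff_sub, coeff_monomial, coeff_monomial]
      simp only [single_add_single_eq]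
      simp
    · intro j hj hjk
      rw [Finset.mem_range] at hj
      have hc : M - (j + 1) ≠ M - (k + 1) := by omega
      rw [hterm, coeff_sub, coeff_monomial, coeff_monomial]
      simp only [single_add_single_eq]
      simp [hc]
  have h2 := congrArg (coeff (Finsupp.single 0 (a k) + Finsupp.single 1 (M - (k + 1)))) hs
  rw [hsum a (a k), hsum b (a k)] at h2
  have h3 : (if a k = a k then (1 : ℚ) else 0) = if b k = a k then (1 : ℚ) else 0 :=
    sub_left_inj.mp h2
  rw [if_pos rfl] at h3
  by_cases hba : b k = a k
  · exact hba.symm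
  · rw [if_neg hba] at h3
    exact absurd h3 (one_ne_zero)

/-- For `q, t, u_1, …, u_N` algebraically independent over `ℚ`, the eigenvalues
`e_{λ⃗} = Σ_i u_i ε_{λ^{(i)}}` are non-degenerate: `e_{λ⃗} = e_{μ⃗}` implies `λ⃗ = μ⃗`. -/
theorem eigenvalues_nondegenerate {K : Type*} [Field K] [CharZero K] (N : ℕ)
    (q t : K) (u : Fin N → K)
    (h : AlgebraicIndependent ℚ (Sum.elim ![q, t] u))
    (lam mu : Fin N → Partition')
    (he : ∑ i, u i * eps q t (lam i) = ∑ i, u i * eps q t (mu i)) :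
    lam = mu := by
  set f : Fin 2 ⊕ Fin N → K := Sum.elim ![q, t] u with hf
  have hinj : Function.Injective (aeval f : MvPolynomial (Fin 2 ⊕ Fin N) ℚ →ₐ[ℚ] K) :=
    algebraicIndependent_iff_injective_aeval.mp h
  have ht : t ≠ 0 := by
    intro h0
    have h1 : (aeval f : MvPolynomial (Fin 2 ⊕ Fin N) ℚ →ₐ[ℚ] K) (X (Sum.inl 1))
        = (aeval f : MvPolynomial (Fin 2 ⊕ Fin N) ℚ →ₐ[ℚ] K) 0 := by
      simp [hf, h0]
    exact X_ne_zero _ (hinj h1)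
  set M : ℕ := Finset.univ.sup (fun i => max (lam i).length (mu i).length) with hM
  have hlam : ∀ i, (lam i).length ≤ M := fun i => by
    rw [hM]
    exact le_trans (le_max_left _ _) (Finset.le_sup (f := fun j => max (lam j).length (mu j).length) (Finset.mem_univ i))
  have hmu : ∀ i, (mu i).length ≤ M := fun i => by
    rw [hM]
    exact le_trans (le_max_right _ _) (Finset.le_sup (f := fun j => max (lam j).length (mu j).length) (Finset.mem_univ i))
  set F : MvPolynomial (Fin 2 ⊕ Fin N) ℚ :=
    ∑ i, X (Sum.inr i) * (rename Sum.inl (Pl (lam i) M) - rename Sum.inl (Pl (mu i) M)) with hF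
  have hfl : f ∘ Sum.inl = ![q, t] := by rw [hf]; rfl
  have hevalF : aeval f F = 0 := by
    have : aeval f F = ∑ i, u i
        * (t ^ M * (eps q t (lam i) - 1) - t ^ M * (eps q t (mu i) - 1)) := by
      rw [hF, map_sum]
      refine Finset.sum_congr rfl fun i _ => ?_
      rw [map_mul, map_sub, aeval_rename, aeval_rename, hfl,
        eval_Pl q t ht _ M (hlam i), eval_Pl q t ht _ M (hmu i), aeval_X, hf]
      rfl
    rw [this]
    have h2 : ∀ i : Fin N, u i
        * (t ^ M * (eps q t (lam i) - 1) - t ^ M * (eps q t (mu i) - 1))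
        = t ^ M * (u i * eps q t (lam i) - u i * eps q t (mu i)) := fun i => by ring
    rw [Finset.sum_congr rfl fun i _ => h2 i, ← Finset.mul_sum,
      Finset.sum_sub_distrib, he, sub_self, mul_zero]
  have hF0 : F = 0 := hinj (by rw [hevalF, map_zero])
  funext i
  -- specialize the u-variables
  set φ : MvPolynomial (Fin 2 ⊕ Fin N) ℚ →ₐ[ℚ] MvPolynomial (Fin 2) ℚ :=
    aeval (Sum.elim X (fun j => if j = i then 1 else 0)) with hφ
  have hφF : φ F = Pl (lam i) M - Pl (mu i) M := by
    rw [hF, map_sum]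
    have hterm : ∀ j : Fin N,
        φ (X (Sum.inr j) * (rename Sum.inl (Pl (lam j) M) - rename Sum.inl (Pl (mu j) M)))
        = (if j = i then 1 else 0) * (Pl (lam j) M - Pl (mu j) M) := by
      intro j
      rw [map_mul, map_sub, hφ, aeval_rename, aeval_rename, aeval_X]
      have : (Sum.elim X (fun j : Fin N => if j = i then (1 : MvPolynomial (Fin 2) ℚ) else 0))
          ∘ Sum.inl = X := rfl
      rw [this, aeval_X_left_apply, aeval_X_left_apply]
      rfl
    rw [Finset.sum_congr rfl fun j _ => hterm j]
    simp
  have hPl : Pl (lam i) M = Pl (mu i) M := by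
    rw [hF0, map_zero] at hφF
    exact (sub_eq_zero.mp hφF.symm)
  have hX1 : (X 1 - 1 : MvPolynomial (Fin 2) ℚ) ≠ 0 := by
    intro hc
    have := congrArg (eval (fun _ => (0 : ℚ))) hc
    simp at this
  unfold Pl at hPl
  have hS := mul_left_cancel₀ hX1 hPl
  apply Partition'.ext'
  apply Finsupp.ext
  intro k
  by_cases hkM : k < M
  · exact extract M (lam i).parts (mu i).parts hS hkM
  · rw [(lam i).parts_eq_zero (le_trans (hlam i) (not_lt.mp hkM)),
      (mu i).parts_eq_zero (le_trans (hmu i) (not_lt.mp hkM))]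
end

section
/- For a single partition λ with generic q, t (e.g. q, t algebraically independent transcendentals), the map λ ↦ ε_λ = 1 + (t−1) Σ_{k=1}^{ℓ(λ)} (q^{λ_k} − 1) t^{−k} is injective on the set of all partitions. -/
lemma Partition'.parts_eq_zero_iff (l : Partition') (k : ℕ) :
    l.parts k = 0 ↔ l.length ≤ k := by
  constructor
  · intro h0
    have hsub : l.parts.support ⊆ Finset.range k := by
      intro j hj
      simp only [Finsupp.mem_support_iff] at hj
      simp only [Finset.mem_range]
      by_contra hjk
      push_neg at hjk
      have := l.antitone hjk
      omega
    simpa [Partition'.length] using Finset.card_le_card hsub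
  · intro hlk
    by_contra h0
    have hsub : Finset.range (k + 1) ⊆ l.parts.support := by
      intro i hi
      simp only [Finset.mem_range, Nat.lt_succ_iff] at hi
      simp only [Finsupp.mem_support_iff]
      have := l.antitone hi
      omega
    have := Finset.card_le_card hsub
    simp only [Finset.card_range] at this
    have : l.length ≥ k + 1 := this
    omega

private lemma finsupp_pair_eq_iff (x y d d' : ℕ) :
    Finsupp.single (0 : Fin 2) x + Finsupp.single 1 d
      = Finsupp.single (0 : Fin 2) y + Finsupp.single 1 d' ↔ x = y ∧ d = d' := by
  constructor
  · intro hEq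
    have h0 := DFunLike.congr_fun hEq (0 : Fin 2)
    have h1 := DFunLike.congr_fun hEq (1 : Fin 2)
    simp [Finsupp.single_apply] at h0 h1
    exact ⟨h0, h1⟩
  · rintro ⟨rfl, rfl⟩; rfl

open MvPolynomial in
private lemma coeff_key (c : ℕ → ℕ) (N k : ℕ) (hk : k < N) (a : ℕ) :
    MvPolynomial.coeff (Finsupp.single (0 : Fin 2) a + Finsupp.single 1 (N - 1 - k))
      (∑ j ∈ Finset.range N,
        (MvPolynomial.X (0 : Fin 2) ^ (c j) - 1) * MvPolynomial.X 1 ^ (N - 1 - j) :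
        MvPolynomial (Fin 2) ℚ)
    = (if c k = a then 1 else 0) - (if (0 : ℕ) = a then 1 else 0) := by
  have hterm : ∀ j, ((MvPolynomial.X (0 : Fin 2) ^ (c j) - 1) * MvPolynomial.X 1 ^ (N - 1 - j) :
      MvPolynomial (Fin 2) ℚ)
      = monomial (Finsupp.single (0 : Fin 2) (c j) + Finsupp.single 1 (N - 1 - j)) 1
        - monomial (Finsupp.single (0 : Fin 2) 0 + Finsupp.single 1 (N - 1 - j)) 1 := by
    intro j
    rw [sub_mul, one_mul, X_pow_eq_monomial, X_pow_eq_monomial, monomial_mul, mul_one,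
      Finsupp.single_zero, zero_add]
  rw [MvPolynomial.coeff_sum]
  rw [Finset.sum_eq_single k]
  · rw [hterm, MvPolynomial.coeff_sub, MvPolynomial.coeff_monomial, MvPolynomial.coeff_monomial]
    simp only [finsupp_pair_eq_iff, and_true, eq_self_iff_true]
  · intro j hj hjk
    simp only [Finset.mem_range] at hj
    rw [hterm, MvPolynomial.coeff_sub, MvPolynomial.coeff_monomial, MvPolynomial.coeff_monomial]
    rw [if_neg, if_neg]
    · ring
    · rw [finsupp_pair_eq_iff]; rintro ⟨-, h2⟩; omega
    · rw [finsupp_pair_eq_iff]; rintro ⟨-, h2⟩; omega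
  · intro hkN
    exact absurd (Finset.mem_range.mpr hk) hkN

/-- For generic `q, t` (algebraically independent over `ℚ`), the map
`λ ↦ ε_λ` is injective on the set of all partitions. -/
theorem eps_injective {K : Type*} [Field K] [CharZero K] (q t : K)
    (h : AlgebraicIndependent ℚ ![q, t]) :
    Function.Injective (eps q t) := by
  have ht : t ≠ 0 := by
    intro h0
    exact (h.transcendental 1) (by simp [h0, isAlgebraic_zero])
  have ht1 : t - 1 ≠ 0 := by
    intro h0
    have : t = 1 := sub_eq_zero.mp h0
    exact (h.transcendental 1) (by simp [this, isAlgebraic_one])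
  intro l m hlm
  set N := max l.length m.length with hN
  -- extend the sums to range N
  have hsum : ∀ p : Partition', p.length ≤ N →
      (∑ k ∈ Finset.range p.length, (q ^ (p.parts k) - 1) * (t ^ (k + 1))⁻¹)
      = ∑ k ∈ Finset.range N, (q ^ (p.parts k) - 1) * (t ^ (k + 1))⁻¹ := by
    intro p hp
    apply Finset.sum_subset (Finset.range_subset_range.mpr hp)
    intro k _ hk
    simp only [Finset.mem_range, not_lt] at hk
    rw [(p.parts_eq_zero_iff k).mpr hk]
    simp
  have hS : (∑ k ∈ Finset.range N, (q ^ (l.parts k) - 1) * (t ^ (k + 1))⁻¹)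
      = ∑ k ∈ Finset.range N, (q ^ (m.parts k) - 1) * (t ^ (k + 1))⁻¹ := by
    unfold eps at hlm
    have h2 := add_left_cancel hlm
    have h3 := mul_left_cancel₀ ht1 h2
    rw [hsum l (le_max_left _ _), hsum m (le_max_right _ _)] at h3
    exact h3
  -- multiply by t^N
  have hmul : ∀ p : Partition',
      t ^ N * (∑ k ∈ Finset.range N, (q ^ (p.parts k) - 1) * (t ^ (k + 1))⁻¹)
      = ∑ k ∈ Finset.range N, (q ^ (p.parts k) - 1) * t ^ (N - 1 - k) := by
    intro p
    rw [Finset.mul_sum]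
    refine Finset.sum_congr rfl fun k hk => ?_
    simp only [Finset.mem_range] at hk
    have hNk : (N - 1 - k) + (k + 1) = N := by omega
    rw [← hNk, pow_add]
    field_simp
    ring_nf
    rw [show 1 + (N - 1 - k) + k - 1 - k = N - 1 - k by omega]
  have hA : (∑ k ∈ Finset.range N, (q ^ (l.parts k) - 1) * t ^ (N - 1 - k))
      = ∑ k ∈ Finset.range N, (q ^ (m.parts k) - 1) * t ^ (N - 1 - k) := by
    rw [← hmul l, ← hmul m, hS]
  -- polynomial identity
  have hval : ∀ p : Partition',
      (MvPolynomial.aeval ![q, t])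
        (∑ j ∈ Finset.range N,
          (MvPolynomial.X (0 : Fin 2) ^ (p.parts j) - 1) * MvPolynomial.X 1 ^ (N - 1 - j) :
          MvPolynomial (Fin 2) ℚ)
      = ∑ k ∈ Finset.range N, (q ^ (p.parts k) - 1) * t ^ (N - 1 - k) := by
    intro p
    rw [map_sum]
    refine Finset.sum_congr rfl fun k _ => ?_
    simp [Matrix.cons_val_zero, Matrix.cons_val_one, Matrix.head_cons]
  have hPol :
      (∑ j ∈ Finset.range N,
        (MvPolynomial.X (0 : Fin 2) ^ (l.parts j) - 1) * MvPolynomial.X 1 ^ (N - 1 - j) :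
        MvPolynomial (Fin 2) ℚ)
      = ∑ j ∈ Finset.range N,
        (MvPolynomial.X (0 : Fin 2) ^ (m.parts j) - 1) * MvPolynomial.X 1 ^ (N - 1 - j) := by
    apply algebraicIndependent_iff_injective_aeval.mp h
    rw [hval l, hval m, hA]
  have hparts : ∀ k, l.parts k = m.parts k := by
    intro k
    by_cases hk : k < N
    · have hc := congrArg
        (MvPolynomial.coeff (Finsupp.single (0 : Fin 2) (l.parts k) + Finsupp.single 1 (N - 1 - k)))
        hPol
      rw [coeff_key (fun j => l.parts j) N k hk, coeff_key (fun j => m.parts j) N k hk] at hc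
      by_cases hmn : m.parts k = l.parts k
      · exact hmn.symm
      · rw [if_pos rfl, if_neg hmn] at hc
        exact absurd (sub_left_inj.mp hc) one_ne_zero
    · push_neg at hk
      rw [(l.parts_eq_zero_iff k).mpr (le_trans (le_max_left _ _) hk),
        (m.parts_eq_zero_iff k).mpr (le_trans (le_max_right _ _) hk)]
  obtain ⟨lp, hl⟩ := l
  obtain ⟨mp, hm⟩ := m
  have hpm : lp = mp := Finsupp.ext hparts
  subst hpm
  rfl
end
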